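/- arXiv:1710.11203 — 3 statements merged into one kernel-verified Lean document; each statement's English description precedes it below -/
import Mathlib

section
/- Let λ_1, ..., λ_{nk} be distinct real numbers and A(z) the diagonal matrix polynomial with (r,r) entry α_r ∏_{q ∈ [k]_r}(z - λ_q) (α_r ≠ 0). Define f : ℝ^{nk} → ℝ^{nk} mapping the vector of diagonal coefficient entries (x_{s,r})_{0≤s≤k-1, 1≤r≤n} to the list of nk proper values of the matrix polynomial z^k A_k + Σ_{s=0}^{k-1} z^s diag(x_{s,1},...,x_{s,n}). Then the partial derivative ∂λ_q/∂x_{s,r}, evaluated at A(z), equals -λ_q^s / (A^{(1)}(λ_q))_{rr} if q ∈ [k]_r, and 0 otherwise, and the resulting nk×nk Jacobian matrix is nonsingular. -/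
open Polynomial Finset



theorem implicit_one_dim {E : Type*} [NormedAddCommGroup E] [NormedSpace ℝ E] [CompleteSpace E]
    (Φ : E × ℝ → ℝ) (a : E) (z0 : ℝ) (L : E →L[ℝ] ℝ) (c : ℝ) (hc : c ≠ 0)
    (hΦ : HasStrictFDerivAt Φ (L.comp (ContinuousLinearMap.fst ℝ E ℝ) +
        c • ContinuousLinearMap.snd ℝ E ℝ) (a, z0))
    (h0 : Φ (a, z0) = 0) :
    ∃ g : E → ℝ, g a = z0 ∧ HasStrictFDerivAt g ((-c⁻¹) • L) a ∧
      ∀ᶠ x in nhds a, Φ (x, g x) = 0 := by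
  set D : (E × ℝ) →L[ℝ] ℝ := L.comp (ContinuousLinearMap.fst ℝ E ℝ) +
      c • ContinuousLinearMap.snd ℝ E ℝ with hD
  have hDapp : ∀ u : E × ℝ, D u = L u.1 + c * u.2 := by
    intro u
    simp [hD, ContinuousLinearMap.smul_apply, smul_eq_mul]
  let φ : ImplicitFunctionData ℝ (E × ℝ) ℝ E :=
    { leftFun := Φ
      leftDeriv := D
      rightFun := Prod.fst
      rightDeriv := ContinuousLinearMap.fst ℝ E ℝ
      pt := (a, z0)
      hasStrictFDerivAt_leftFun := hΦ
      hasStrictFDerivAt_rightFun := (ContinuousLinearMap.fst ℝ E ℝ).hasStrictFDerivAt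
      range_leftDeriv := by
        rw [LinearMap.range_eq_top]
        intro y
        exact ⟨(0, y / c), by rw [ContinuousLinearMap.coe_coe, hDapp]; simp; field_simp⟩
      range_rightDeriv := by
        rw [LinearMap.range_eq_top]
        intro v
        exact ⟨(v, 0), rfl⟩
      isCompl_ker := by
        constructor
        · rw [Submodule.disjoint_def]
          rintro ⟨v, t⟩ h1 h2
          rw [LinearMap.mem_ker] at h1 h2
          have hv : v = 0 := h2
          rw [ContinuousLinearMap.coe_coe, hDapp] at h1
          simp only [hv, map_zero, zero_add] at h1
          have : t = 0 := by
            rcases mul_eq_zero.1 h1 with h | h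
            · exact absurd h hc
            · exact h
          simp [hv, this]
        · rw [codisjoint_iff, eq_top_iff]
          rintro ⟨v, t⟩ _
          rw [Submodule.mem_sup]
          refine ⟨(v, -(L v) / c), ?_, (0, t + L v / c), ?_, ?_⟩
          · rw [LinearMap.mem_ker, ContinuousLinearMap.coe_coe, hDapp]
            field_simp
            ring
          · rw [LinearMap.mem_ker]
            rfl
          · ext <;> simp <;> ring }
  refine ⟨fun x => (φ.implicitFunction 0 x).2, ?_, ?_, ?_⟩
  · have h1 := φ.implicitFunction_apply_image.self_of_nhds
    have h2 : φ.implicitFunction (Φ (a, z0)) a = (a, z0) := h1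
    rw [h0] at h2
    exact congrArg Prod.snd h2
  · have h2 : (ContinuousLinearMap.fst ℝ E ℝ).comp
        ((ContinuousLinearMap.id ℝ E).prod ((-c⁻¹) • L)) = ContinuousLinearMap.id ℝ E := by
      ext v
      simp
    have h3 : D.comp ((ContinuousLinearMap.id ℝ E).prod ((-c⁻¹) • L)) = 0 := by
      ext v
      rw [ContinuousLinearMap.comp_apply, hDapp]
      simp only [ContinuousLinearMap.prod_apply, ContinuousLinearMap.coe_id', id_eq,
        ContinuousLinearMap.smul_apply, smul_eq_mul, ContinuousLinearMap.zero_apply]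
      field_simp
      ring
    have hg' := φ.implicitFunction_hasStrictFDerivAt
      ((ContinuousLinearMap.id ℝ E).prod ((-c⁻¹) • L)) h2 h3
    have hg'' : HasStrictFDerivAt (φ.implicitFunction 0) 
        ((ContinuousLinearMap.id ℝ E).prod ((-c⁻¹) • L)) a := by
      have : φ.leftFun φ.pt = 0 := h0
      rwa [this] at hg'
    have hsnd := (ContinuousLinearMap.snd ℝ E ℝ).hasStrictFDerivAt
      (x := φ.implicitFunction 0 a)
    have hcomp := hsnd.comp a hg''
    have heq : (ContinuousLinearMap.snd ℝ E ℝ).comp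
        ((ContinuousLinearMap.id ℝ E).prod ((-c⁻¹) • L)) = (-c⁻¹) • L := by
      ext v
      simp
    rwa [heq] at hcomp
  · have h4 := φ.prod_map_implicitFunction
    have hpt : φ.prodFun φ.pt = ((0 : ℝ), a) := by
      simp only [ImplicitFunctionData.prodFun]
      exact Prod.ext h0 rfl
    rw [hpt] at h4
    have hcont : Filter.Tendsto (fun x : E => ((0 : ℝ), x)) (nhds a) (nhds ((0 : ℝ), a)) :=
      (continuous_const.prodMk continuous_id).tendsto a
    filter_upwards [hcont.eventually h4] with x hx
    have hx1 : Φ (φ.implicitFunction 0 x) = 0 := congrArg Prod.fst hx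
    have hx2 : (φ.implicitFunction 0 x).1 = x := congrArg Prod.snd hx
    have h5 : (x, (φ.implicitFunction 0 x).2) = φ.implicitFunction 0 x :=
      Prod.ext hx2.symm rfl
    rw [h5, hx1]

theorem vieta_aux {k : ℕ} (α : ℝ) (lam : Fin k → ℝ) :
    Polynomial.C α * ∏ q : Fin k, (Polynomial.X - Polynomial.C (lam q)) =
      Polynomial.C α * Polynomial.X ^ k +
        ∑ s : Fin k, Polynomial.C ((-1 : ℝ) ^ (k - (s : ℕ)) * α *
          ∑ Q ∈ Finset.powersetCard (k - (s : ℕ)) (Finset.univ : Finset (Fin k)),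
            ∏ q ∈ Q, lam q) * Polynomial.X ^ (s : ℕ) := by
  have hmonic : (∏ q : Fin k, (X - C (lam q))).Monic :=
    monic_prod_of_monic _ _ fun q _ => monic_X_sub_C _
  have hdeg : (∏ q : Fin k, (X - C (lam q))).natDegree = k := by
    rw [natDegree_prod_of_monic _ _ fun q _ => monic_X_sub_C _]
    simp
  have hQ : ∀ m : ℕ, m ≤ k → (∏ q : Fin k, (X - C (lam q))).coeff m
      = (-1 : ℝ) ^ (k - m) *
        ∑ Q ∈ Finset.powersetCard (k - m) (Finset.univ : Finset (Fin k)), ∏ q ∈ Q, lam q := by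
    intro m hm
    have h1 : (∏ q : Fin k, (X - C (lam q)))
        = (((Finset.univ : Finset (Fin k)).val.map lam).map (fun t => X - C t)).prod := by
      rw [Multiset.map_map]
      rfl
    have hcard : Multiset.card (((Finset.univ : Finset (Fin k)).val.map lam)) = k := by simp
    rw [h1, Multiset.prod_X_sub_C_coeff _ (by rw [hcard]; exact hm), hcard,
      Finset.esymm_map_val]
  ext m
  rw [coeff_C_mul, coeff_add, coeff_C_mul, coeff_X_pow, finset_sum_coeff]
  simp only [coeff_C_mul, coeff_X_pow, mul_ite, mul_one, mul_zero]
  rcases lt_trichotomy m k with hm | hm | hm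
  · rw [hQ m hm.le]
    have h2 : ∀ s : Fin k,
        (if m = (s : ℕ) then ((-1 : ℝ) ^ (k - (s : ℕ)) * α *
          ∑ Q ∈ Finset.powersetCard (k - (s : ℕ)) (Finset.univ : Finset (Fin k)),
            ∏ q ∈ Q, lam q) else 0)
        = (if (⟨m, hm⟩ : Fin k) = s then ((-1 : ℝ) ^ (k - (s : ℕ)) * α *
          ∑ Q ∈ Finset.powersetCard (k - (s : ℕ)) (Finset.univ : Finset (Fin k)),
            ∏ q ∈ Q, lam q) else 0) := by
      intro s
      exact if_congr (by simp [Fin.ext_iff, eq_comm]) rfl rfl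
    rw [Finset.sum_congr rfl fun s _ => h2 s, Finset.sum_ite_eq]
    simp [hm.ne]
    ring
  · subst hm
    have h3 : (∏ q : Fin m, (X - C (lam q))).coeff m = 1 := by
      have := hmonic.leadingCoeff
      rwa [leadingCoeff, hdeg] at this
    rw [h3]
    rw [Finset.sum_eq_zero]
    · simp
    · intro s _
      rw [if_neg (by have := s.isLt; omega)]
  · rw [coeff_eq_zero_of_natDegree_lt (lt_of_le_of_lt (le_of_eq hdeg) hm)]
    rw [Finset.sum_eq_zero]
    · simp [Nat.ne_of_gt hm]
    · intro s _
      rw [if_neg (by have := s.isLt; omega)]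

theorem derivative_finset_prod {ι : Type*} (s : Finset ι) [DecidableEq ι]
    (f : ι → Polynomial ℝ) :
    Polynomial.derivative (∏ i ∈ s, f i) =
      ∑ i ∈ s, (∏ j ∈ s.erase i, f j) * Polynomial.derivative (f i) := by
  rw [Finset.prod_eq_multiset_prod, derivative_prod, Finset.sum_eq_multiset_sum]
  congr 1

theorem deriv_eval_aux {k : ℕ} (α : ℝ) (lam : Fin k → ℝ) (q : Fin k) :
    (Polynomial.derivative (Polynomial.C α * ∏ j : Fin k, (Polynomial.X - Polynomial.C (lam j)))).eval (lam q)
      = α * ∏ j ∈ Finset.univ.erase q, (lam q - lam j) := by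
  rw [derivative_C_mul, derivative_finset_prod]
  simp only [derivative_sub, derivative_X, derivative_C, sub_zero, mul_one]
  rw [eval_mul, eval_C, eval_finset_sum]
  congr 1
  rw [Finset.sum_eq_single q]
  · simp [eval_prod]
  · intro b _ hb
    rw [eval_prod]
    apply Finset.prod_eq_zero (Finset.mem_erase.2 ⟨fun h => hb h.symm, Finset.mem_univ q⟩)
    simp
  · simp

theorem phi_strict {ι : Type*} [Fintype ι] [DecidableEq ι] (k : ℕ) (A : ℝ) (sel : Fin k → ι)
    (a : ι → ℝ) (z0 : ℝ) :
    HasStrictFDerivAt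
      (fun u : (ι → ℝ) × ℝ => A * u.2 ^ k + ∑ s : Fin k, u.1 (sel s) * u.2 ^ (s : ℕ))
      ((∑ s : Fin k, (z0 ^ (s : ℕ)) •
          (ContinuousLinearMap.proj (R := ℝ) (φ := fun _ : ι => ℝ) (sel s))).comp
            (ContinuousLinearMap.fst ℝ (ι → ℝ) ℝ) +
        (A * (k * z0 ^ (k - 1)) + ∑ s : Fin k, a (sel s) * ((s : ℕ) * z0 ^ ((s : ℕ) - 1))) •
          ContinuousLinearMap.snd ℝ (ι → ℝ) ℝ)
      (a, z0) := by
  have hpow : ∀ n : ℕ, HasStrictFDerivAt (fun u : (ι → ℝ) × ℝ => u.2 ^ n)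
      (((n : ℝ) * z0 ^ (n - 1)) • ContinuousLinearMap.snd ℝ (ι → ℝ) ℝ) (a, z0) :=
    fun n => (hasStrictDerivAt_pow n z0).comp_hasStrictFDerivAt (a, z0) hasStrictFDerivAt_snd
  have h1 := (hpow k).const_mul A
  have hterm : ∀ s : Fin k, HasStrictFDerivAt
      (fun u : (ι → ℝ) × ℝ => u.1 (sel s) * u.2 ^ (s : ℕ))
      ((a (sel s)) • (((s : ℝ) * z0 ^ ((s : ℕ) - 1)) • ContinuousLinearMap.snd ℝ (ι → ℝ) ℝ) +
        (z0 ^ (s : ℕ)) • ((ContinuousLinearMap.proj (R := ℝ) (φ := fun _ : ι => ℝ) (sel s)).comp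
          (ContinuousLinearMap.fst ℝ (ι → ℝ) ℝ))) (a, z0) := by
    intro s
    exact (((ContinuousLinearMap.proj (R := ℝ) (φ := fun _ : ι => ℝ) (sel s)).comp
      (ContinuousLinearMap.fst ℝ (ι → ℝ) ℝ)).hasStrictFDerivAt).mul (hpow (s : ℕ))
  have h2 := HasStrictFDerivAt.sum (u := Finset.univ) fun s _ => hterm s
  have h3 := h1.add h2
  have heq : ((∑ s : Fin k, (z0 ^ (s : ℕ)) •
          (ContinuousLinearMap.proj (R := ℝ) (φ := fun _ : ι => ℝ) (sel s))).comp
            (ContinuousLinearMap.fst ℝ (ι → ℝ) ℝ) +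
        (A * (k * z0 ^ (k - 1)) + ∑ s : Fin k, a (sel s) * ((s : ℕ) * z0 ^ ((s : ℕ) - 1))) •
          ContinuousLinearMap.snd ℝ (ι → ℝ) ℝ)
      = (A • ((k : ℝ) * z0 ^ (k - 1)) • ContinuousLinearMap.snd ℝ (ι → ℝ) ℝ +
      ∑ i : Fin k,
        ((a (sel i)) • (((i : ℕ) : ℝ) * z0 ^ ((i : ℕ) - 1)) • ContinuousLinearMap.snd ℝ (ι → ℝ) ℝ +
          (z0 ^ (i : ℕ)) • ((ContinuousLinearMap.proj (R := ℝ) (φ := fun _ : ι => ℝ) (sel i)).comp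
            (ContinuousLinearMap.fst ℝ (ι → ℝ) ℝ)))) := by
    apply ContinuousLinearMap.ext
    intro u
    simp only [ContinuousLinearMap.add_apply, ContinuousLinearMap.coe_comp', Function.comp_apply,
    ContinuousLinearMap.coe_fst', ContinuousLinearMap.smul_apply, ContinuousLinearMap.coe_snd',
    ContinuousLinearMap.coe_sum', Finset.sum_apply, ContinuousLinearMap.proj_apply,
    smul_eq_mul]
    rw [Finset.sum_add_distrib, add_mul, Finset.sum_mul]
    simp only [mul_assoc]
    ring
  rw [heq]
  exact h3.congr_of_eventuallyEq (Filter.Eventually.of_forall fun u => by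
    simp only [Pi.add_apply, Finset.sum_apply])


/-- At the special diagonal matrix polynomial `A(z)`, the map `f` sending the
diagonal coefficient entries `x_{s,r}` (the leading coefficient `diag α` being
fixed) to the `nk` proper values is differentiable, its Jacobian has entries
`-λ_{r,q}^s / (A⁽¹⁾(λ_{r,q}))_{rr}` for `q ∈ [k]_r` and `0` otherwise, and this
Jacobian matrix is nonsingular. -/
theorem stmt_8 (n k : ℕ) (hk : 0 < k) (α : Fin n → ℝ) (hα : ∀ r, α r ≠ 0)
    (lam : Fin n → Fin k → ℝ)
    (hdist : Function.Injective (fun p : Fin n × Fin k => lam p.1 p.2)) :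
    -- the coefficients of the diagonal entries of `A(z)` (Eq. (wow))
    let a : (Fin n × Fin k) → ℝ := fun rs =>
      (-1 : ℝ) ^ (k - (rs.2 : ℕ)) * α rs.1 *
        ∑ Q ∈ Finset.powersetCard (k - (rs.2 : ℕ)) (Finset.univ : Finset (Fin k)),
          ∏ q ∈ Q, lam rs.1 q
    -- the diagonal entries of the matrix polynomial, as functions of the
    -- diagonal coefficient variables `x`
    let P : ((Fin n × Fin k) → ℝ) → Fin n → Polynomial ℝ := fun x r =>
      Polynomial.C (α r) * Polynomial.X ^ k +
        ∑ s : Fin k, Polynomial.C (x (r, s)) * Polynomial.X ^ (s : ℕ)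
    -- the claimed Jacobian matrix
    let Jmat : Matrix (Fin n × Fin k) (Fin n × Fin k) ℝ := fun rq rs =>
      if rs.1 = rq.1 then
        - (lam rq.1 rq.2) ^ (rs.2 : ℕ) /
          ((Polynomial.derivative (Polynomial.C (α rq.1) *
              ∏ q : Fin k, (Polynomial.X - Polynomial.C (lam rq.1 q)))).eval
            (lam rq.1 rq.2))
      else 0
    ∃ (U : Set ((Fin n × Fin k) → ℝ))
      (f : ((Fin n × Fin k) → ℝ) → (Fin n × Fin k) → ℝ),
      U ∈ nhds a ∧
      -- on `U`, `f x` enumerates (without repetition) the proper values of the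
      -- diagonal matrix polynomial determined by `x`
      (∀ x ∈ U, Function.Injective (f x) ∧
        ∀ z : ℝ, ((Matrix.diagonal (P x)).det.eval z = 0 ↔ ∃ i, f x i = z)) ∧
      (f a = fun rq => lam rq.1 rq.2) ∧
      HasFDerivAt f (LinearMap.toContinuousLinearMap (Matrix.toLin' Jmat)) a ∧
      IsUnit Jmat := by
  intro a P Jmat
  -- basic notation
  set z0 : Fin n × Fin k → ℝ := fun p => lam p.1 p.2 with hz0
  set c : Fin n × Fin k → ℝ := fun p =>
    (Polynomial.derivative (Polynomial.C (α p.1) *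
      ∏ q : Fin k, (Polynomial.X - Polynomial.C (lam p.1 q)))).eval (lam p.1 p.2) with hcdef
  have hrowinj : ∀ r, Function.Injective (lam r) := by
    intro r q q' h
    have := hdist (a₁ := (r, q)) (a₂ := (r, q')) h
    exact (Prod.ext_iff.1 this).2
  have hc : ∀ p, c p ≠ 0 := by
    intro p
    rw [hcdef]
    simp only
    rw [deriv_eval_aux]
    refine mul_ne_zero (hα p.1) (Finset.prod_ne_zero_iff.2 fun j hj => ?_)
    rw [sub_ne_zero]
    intro h
    exact (Finset.mem_erase.1 hj).1 (hrowinj p.1 h.symm)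
  have hPa : ∀ r, P a r = Polynomial.C (α r) * ∏ q : Fin k, (Polynomial.X - Polynomial.C (lam r q)) :=
    fun r => (vieta_aux (α r) (lam r)).symm
  -- the implicit functions
  have himpl : ∀ p : Fin n × Fin k, ∃ g : ((Fin n × Fin k) → ℝ) → ℝ,
      g a = z0 p ∧
      HasStrictFDerivAt g ((-(c p)⁻¹) •
        (∑ s : Fin k, ((z0 p) ^ (s : ℕ)) •
          ContinuousLinearMap.proj (R := ℝ) (φ := fun _ : Fin n × Fin k => ℝ) (p.1, s))) a ∧
      ∀ᶠ x in nhds a, Polynomial.eval (g x) (P x p.1) = 0 := by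
    intro p
    have hΦeval : ∀ (x : (Fin n × Fin k) → ℝ) (z : ℝ),
        α p.1 * z ^ k + ∑ s : Fin k, x (p.1, s) * z ^ (s : ℕ) = Polynomial.eval z (P x p.1) := by
      intro x z
      simp [P, eval_finset_sum]
    have hcp : c p = α p.1 * (k * (z0 p) ^ (k - 1)) +
        ∑ s : Fin k, a (p.1, s) * ((s : ℕ) * (z0 p) ^ ((s : ℕ) - 1)) := by
      rw [hcdef]
      simp only
      rw [← hPa p.1]
      simp [P, derivative_C_mul, derivative_X_pow, eval_finset_sum, hz0]
    have hstrict := phi_strict k (α p.1) (fun s => (p.1, s)) a (z0 p)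
    rw [← hcp] at hstrict
    have h0 : (fun u : ((Fin n × Fin k) → ℝ) × ℝ =>
        α p.1 * u.2 ^ k + ∑ s : Fin k, u.1 (p.1, s) * u.2 ^ (s : ℕ)) (a, z0 p) = 0 := by
      show α p.1 * (z0 p) ^ k + ∑ s : Fin k, a (p.1, s) * (z0 p) ^ (s : ℕ) = 0
      rw [hΦeval, hPa, eval_mul, eval_prod]
      apply mul_eq_zero_of_right
      apply Finset.prod_eq_zero (Finset.mem_univ p.2)
      simp [hz0]
    obtain ⟨g, hga, hgd, hgz⟩ := implicit_one_dim _ a (z0 p) _ (c p) (hc p) hstrict h0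
    refine ⟨g, hga, hgd, ?_⟩
    filter_upwards [hgz] with x hx
    rw [← hΦeval]
    exact hx
  choose g hg0 hgd hgz using himpl
  -- the neighbourhood
  set U : Set ((Fin n × Fin k) → ℝ) := {x | (∀ p, Polynomial.eval (g p x) (P x p.1) = 0) ∧
      (∀ p p', p ≠ p' → g p x ≠ g p' x)} with hUdef
  have hU : U ∈ nhds a := by
    have hU1 : ∀ᶠ x in nhds a, ∀ p, Polynomial.eval (g p x) (P x p.1) = 0 :=
      Filter.eventually_all.2 fun p => hgz p
    have hU2 : ∀ᶠ x in nhds a, ∀ p p', p ≠ p' → g p x ≠ g p' x := by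
      rw [Filter.eventually_all]
      intro p
      rw [Filter.eventually_all]
      intro p'
      by_cases hpp : p = p'
      · exact Filter.Eventually.of_forall fun x h => absurd hpp h
      · have htp : Filter.Tendsto (fun x => g p x - g p' x) (nhds a) (nhds (z0 p - z0 p')) := by
          have h1 : Filter.Tendsto (g p) (nhds a) (nhds (z0 p)) := by
            have := (hgd p).continuousAt.tendsto
            rwa [hg0 p] at this
          have h2 : Filter.Tendsto (g p') (nhds a) (nhds (z0 p')) := by
            have := (hgd p').continuousAt.tendsto
            rwa [hg0 p'] at this
          exact h1.sub h2
        have hne : z0 p - z0 p' ≠ 0 := sub_ne_zero.2 fun h => hpp (hdist h)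
        filter_upwards [htp.eventually_ne hne] with x hx
        intro _
        exact fun h => hx (by rw [h, sub_self])
    exact (hU1.and hU2)
  have hdeg : ∀ x r, (P x r).natDegree = k ∧ P x r ≠ 0 := by
    intro x r
    have hsum : (∑ s : Fin k, Polynomial.C (x (r, s)) * Polynomial.X ^ (s : ℕ)).degree
        < (Polynomial.C (α r) * Polynomial.X ^ k).degree := by
      rw [degree_C_mul_X_pow k (hα r)]
      apply lt_of_le_of_lt (degree_sum_le _ _)
      rw [Finset.sup_lt_iff (by exact WithBot.bot_lt_coe k)]
      intro s _
      exact lt_of_le_of_lt (degree_C_mul_X_pow_le _ _) (by exact_mod_cast WithBot.coe_lt_coe.2 s.isLt)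
    have hdg : (P x r).degree = (k : WithBot ℕ) := by
      show (Polynomial.C (α r) * Polynomial.X ^ k +
        ∑ s : Fin k, Polynomial.C (x (r, s)) * Polynomial.X ^ (s : ℕ)).degree = (k : WithBot ℕ)
      rw [degree_add_eq_left_of_degree_lt hsum, degree_C_mul_X_pow k (hα r)]
    constructor
    · exact natDegree_eq_of_degree_eq_some hdg
    · intro h0
      rw [h0, degree_zero] at hdg
      exact absurd hdg.symm (by simp)
  have key : ∀ x ∈ U, ∀ r z, Polynomial.eval z (P x r) = 0 → ∃ q, g (r, q) x = z := by
    intro x hx r z hz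
    by_contra hcon
    push_neg at hcon
    have hinj : Set.InjOn (fun q => g (r, q) x) (Finset.univ : Finset (Fin k)) := by
      intro q _ q' _ h
      by_contra hne
      exact hx.2 (r, q) (r, q') (by simpa using hne) h
    set T : Finset ℝ := insert z (Finset.image (fun q => g (r, q) x) Finset.univ) with hT
    have hzT : z ∉ Finset.image (fun q => g (r, q) x) Finset.univ := by
      rw [Finset.mem_image]
      rintro ⟨q, -, hq⟩
      exact hcon q hq
    have hTcard : T.card = k + 1 := by
      rw [hT, Finset.card_insert_of_notMem hzT, Finset.card_image_of_injOn hinj]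
      simp
    have hsub : T.val ≤ (P x r).roots := by
      rw [Multiset.le_iff_subset T.nodup]
      intro y hy
      rw [Polynomial.mem_roots (hdeg x r).2]
      rcases Finset.mem_insert.1 (show y ∈ insert z (Finset.image (fun q => g (r, q) x) Finset.univ) from hy) with h | h
      · rw [h]; exact hz
      · obtain ⟨q, -, hq⟩ := Finset.mem_image.1 h
        rw [← hq]
        exact hx.1 (r, q)
    have := Multiset.card_le_card hsub
    rw [show Multiset.card T.val = T.card from rfl, hTcard] at this
    have h2 := (P x r).card_roots'
    rw [(hdeg x r).1] at h2
    omega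
  refine ⟨U, fun x p => g p x, hU, ?_, ?_, ?_, ?_⟩
  · intro x hx
    constructor
    · intro p p' h
      by_contra hne
      exact hx.2 p p' hne h
    · intro z
      rw [Matrix.det_diagonal, eval_prod]
      constructor
      · intro h
        obtain ⟨r, -, hr⟩ := Finset.prod_eq_zero_iff.1 h
        obtain ⟨q, hq⟩ := key x hx r z hr
        exact ⟨(r, q), hq⟩
      · rintro ⟨⟨r, q⟩, hq⟩
        exact Finset.prod_eq_zero (Finset.mem_univ r) (hq ▸ hx.1 (r, q))
  · funext p
    exact hg0 p
  · apply hasFDerivAt_pi''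
    intro p
    have hcomp : (ContinuousLinearMap.proj p).comp
          (LinearMap.toContinuousLinearMap (Matrix.toLin' Jmat))
        = (-(c p)⁻¹) • (∑ s : Fin k, ((z0 p) ^ (s : ℕ)) •
            ContinuousLinearMap.proj (R := ℝ) (φ := fun _ : Fin n × Fin k => ℝ) (p.1, s)) := by
      apply ContinuousLinearMap.ext
      intro v
      simp only [ContinuousLinearMap.comp_apply, ContinuousLinearMap.proj_apply,
        LinearMap.coe_toContinuousLinearMap', Matrix.toLin'_apply, ContinuousLinearMap.smul_apply,
        ContinuousLinearMap.coe_sum', Finset.sum_apply, smul_eq_mul]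
      rw [Matrix.mulVec, dotProduct, Fintype.sum_prod_type]
      rw [Finset.sum_eq_single p.1]
      · rw [Finset.mul_sum]
        apply Finset.sum_congr rfl
        intro s _
        show Jmat p (p.1, s) * v (p.1, s) = _
        simp only [Jmat, if_pos rfl]
        rw [div_eq_mul_inv]
        ring
      · intro r' _ hr'
        apply Finset.sum_eq_zero
        intro s _
        show Jmat p (r', s) * v (r', s) = 0
        simp only [Jmat, if_neg hr']
        exact zero_mul _
      · intro h
        exact absurd (Finset.mem_univ p.1) h
    rw [hcomp]
    exact (hgd p).hasFDerivAt
  · set B : Fin n → Matrix (Fin k) (Fin k) ℝ := fun r =>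
      Matrix.of fun q s => - (lam r q) ^ (s : ℕ) / c (r, q) with hB
    have hJ : Jmat = (Matrix.blockDiagonal B).submatrix
        (Equiv.prodComm (Fin n) (Fin k)) (Equiv.prodComm (Fin n) (Fin k)) := by
      funext pq rs
      show Jmat pq rs = _
      simp only [Matrix.submatrix_apply, Equiv.prodComm_apply, Prod.swap_prod_mk,
        Matrix.blockDiagonal_apply, Jmat, hB, Matrix.of_apply]
      by_cases h : rs.1 = pq.1
      · rw [if_pos h, if_pos (show pq.swap.2 = rs.swap.2 from h.symm)]
        rfl
      · rw [if_neg h, if_neg (show ¬pq.swap.2 = rs.swap.2 from fun hh => h hh.symm)]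
    rw [Matrix.isUnit_iff_isUnit_det, isUnit_iff_ne_zero, hJ,
      Matrix.det_submatrix_equiv_self, Matrix.det_blockDiagonal]
    apply Finset.prod_ne_zero_iff.2
    intro r _
    have hBr : B r = Matrix.diagonal (fun q => -(c (r, q))⁻¹) * Matrix.vandermonde (lam r) := by
      ext q s
      rw [Matrix.diagonal_mul]
      show - (lam r q) ^ (s : ℕ) / c (r, q) = _
      rw [Matrix.vandermonde]
      show _ = -(c (r, q))⁻¹ * (lam r q) ^ (s : ℕ)
      rw [div_eq_mul_inv]
      ring
    rw [hBr, Matrix.det_mul, Matrix.det_diagonal, Matrix.det_vandermonde]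
    apply mul_ne_zero
    · exact Finset.prod_ne_zero_iff.2 fun q _ => neg_ne_zero.2 (inv_ne_zero (hc (r, q)))
    · apply Finset.prod_ne_zero_iff.2
      intro i _
      apply Finset.prod_ne_zero_iff.2
      intro j hj
      rw [sub_ne_zero]
      intro h
      exact absurd (hrowinj r h.symm) (ne_of_lt (Finset.mem_Ioi.1 hj))
end

section
/- Let λ_1, ..., λ_{nk} be nk distinct real numbers, α_1, ..., α_n positive real numbers, and G_0, ..., G_{k-1} simple graphs on n vertices. Then there exist real symmetric n×n matrices A_0, ..., A_{k-1} such that the matrix polynomial A(z) = diag(α_1,...,α_n) z^k + A_{k-1} z^{k-1} + ... + A_1 z + A_0 has exactly {λ_1, ..., λ_{nk}} as the set of zeros of det A(z), and for each s, the graph of A_s is G_s (i.e., for i ≠ j, (A_s)_{ij} ≠ 0 if and only if {i,j} is an edge of G_s). -/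
open Polynomial Finset

namespace Stmt10

noncomputable section

variable {n k : ℕ}

/-- adjacency indicator -/
def ind (G : Fin k → SimpleGraph (Fin n)) (s : Fin k) (i j : Fin n) : ℝ :=
  @ite _ ((G s).Adj i j) (Classical.dec _) 1 0

lemma ind_ne_zero_iff (G : Fin k → SimpleGraph (Fin n)) (s : Fin k) (i j : Fin n) :
    ind G s i j ≠ 0 ↔ (G s).Adj i j := by
  unfold ind; split <;> simp_all

lemma ind_symm (G : Fin k → SimpleGraph (Fin n)) (s : Fin k) (i j : Fin n) :
    ind G s i j = ind G s j i := by
  unfold ind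
  rcases (G s).adj_comm i j with h
  split <;> split <;> simp_all

/-- polynomial of degree < k with coefficients c -/
def lower (k : ℕ) (c : Fin k → ℝ) : ℝ[X] := ∑ s : Fin k, C (c s) * X ^ (s : ℕ)

lemma natDegree_lower_le (c : Fin k → ℝ) (hk : 0 < k) : (lower k c).natDegree ≤ k - 1 := by
  refine natDegree_sum_le_of_forall_le _ _ fun s _ => ?_
  refine le_trans (natDegree_C_mul_le _ _) ?_
  rw [natDegree_X_pow]
  omega

lemma coeff_lower (c : Fin k → ℝ) (s₀ : Fin k) : (lower k c).coeff (s₀ : ℕ) = c s₀ := by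
  rw [lower, finset_sum_coeff]
  rw [Finset.sum_eq_single s₀]
  · simp
  · intro s _ hs
    rw [coeff_C_mul, coeff_X_pow, if_neg (by simpa [Fin.val_inj] using (by exact fun h => hs (by exact Fin.val_inj.mp h.symm) : ¬ ((s₀ : ℕ) = (s : ℕ))))]
    ring
  · simp

lemma coeff_lower_ge (c : Fin k → ℝ) {m : ℕ} (hm : k ≤ m) : (lower k c).coeff m = 0 := by
  rcases Nat.eq_zero_or_pos k with h | h
  · subst h; simp [lower]
  · exact coeff_eq_zero_of_natDegree_lt (lt_of_le_of_lt (natDegree_lower_le c h) (by omega))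

lemma lower_zero : lower k (fun _ => (0:ℝ)) = 0 := by simp [lower]

lemma lower_add_smul (a b : Fin k → ℝ) (t : ℝ) :
    lower k (fun s => a s + t * b s) = lower k a + C t * lower k b := by
  simp only [lower, Finset.mul_sum, ← Finset.sum_add_distrib]
  refine Finset.sum_congr rfl fun s _ => ?_
  rw [C_add, C_mul]; ring

/-- decomposition of a polynomial of degree ≤ k -/
lemma decomp (p : ℝ[X]) (hp : p.natDegree ≤ k) :
    p = C (p.coeff k) * X ^ k + lower k (fun s : Fin k => p.coeff s) := by
  conv_lhs => rw [p.as_sum_range' (k+1) (by omega)]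
  rw [Finset.sum_range_succ, add_comm, lower, Fin.sum_univ_eq_sum_range (fun s => C (p.coeff s) * X ^ s)]
  simp [Polynomial.C_mul_X_pow_eq_monomial]


section Main

variable (lam : Fin (n * k) → ℝ) (α : Fin n → ℝ) (G : Fin k → SimpleGraph (Fin n))

/-- variable index type: `none` is the coupling parameter t, `some (i,s)` the
coefficient of `X^s` in the i-th diagonal entry. -/
abbrev σt (n k : ℕ) := Option (Fin n × Fin k)

abbrev V (n k : ℕ) := σt n k → ℝ

/-- symbolic matrix over MvPolynomial coefficients -/
def Msym : Matrix (Fin n) (Fin n) (Polynomial (MvPolynomial (σt n k) ℝ)) :=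
  Matrix.of fun i j =>
    if i = j then
      C (MvPolynomial.C (α i)) * X ^ k + ∑ s : Fin k, C (MvPolynomial.X (some (i, s))) * X ^ (s : ℕ)
    else
      ∑ s : Fin k, C (MvPolynomial.X none * MvPolynomial.C (ind G s i j)) * X ^ (s : ℕ)

/-- evaluated matrix -/
def Mx (x : V n k) : Matrix (Fin n) (Fin n) ℝ[X] :=
  (Msym α G).map (Polynomial.mapRingHom (MvPolynomial.eval x))

lemma Mx_diag (x : V n k) (i : Fin n) :
    Mx α G x i i = C (α i) * X ^ k + lower k (fun s => x (some (i, s))) := by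
  simp [Mx, Msym, lower, Matrix.map_apply, Polynomial.map_sum]

lemma Mx_off (x : V n k) {i j : Fin n} (hij : i ≠ j) :
    Mx α G x i j = lower k (fun s => x none * ind G s i j) := by
  simp [Mx, Msym, lower, Matrix.map_apply, Polynomial.map_sum, hij]

lemma det_Mx_coeff (x : V n k) (m : ℕ) :
    (Mx α G x).det.coeff m = MvPolynomial.eval x ((Msym α G (n := n)).det.coeff m) := by
  rw [Mx, ← RingHom.mapMatrix_apply, ← RingHom.map_det, coe_mapRingHom, Polynomial.coeff_map]

/-- the i-th diagonal block polynomial -/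
def pb (i : Fin n) : ℝ[X] :=
  C (α i) * ∏ m : Fin k, (X - C (lam (finProdFinEquiv (i, m))))

/-- the target polynomial -/
def tgt : ℝ[X] := ∏ i : Fin n, pb lam α i

lemma pb_natDegree (hα : ∀ r, 0 < α r) (i : Fin n) : (pb lam α i).natDegree = k := by
  rw [pb, natDegree_C_mul (hα i).ne', natDegree_prod]
  · simp
  · intro m _; exact X_sub_C_ne_zero _

lemma pb_ne_zero (hα : ∀ r, 0 < α r) (i : Fin n) : pb lam α i ≠ 0 := by
  rw [pb]
  exact mul_ne_zero (by simp [(hα i).ne']) (Finset.prod_ne_zero_iff.2 fun m _ => X_sub_C_ne_zero _)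

lemma pb_leadingCoeff (hα : ∀ r, 0 < α r) (i : Fin n) : (pb lam α i).leadingCoeff = α i := by
  rw [pb, leadingCoeff_mul, leadingCoeff_C,
    (monic_prod_of_monic _ _ fun m _ => monic_X_sub_C _).leadingCoeff, mul_one]

lemma pb_coeff_k (hα : ∀ r, 0 < α r) (i : Fin n) : (pb lam α i).coeff k = α i := by
  have h := pb_leadingCoeff lam α hα i
  rwa [Polynomial.leadingCoeff, pb_natDegree lam α hα] at h

lemma pb_decomp (hα : ∀ r, 0 < α r) (i : Fin n) :
    pb lam α i = C (α i) * X ^ k + lower k (fun s : Fin k => (pb lam α i).coeff s) := by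
  conv_lhs => rw [decomp (pb lam α i) (pb_natDegree lam α hα i).le]
  rw [pb_coeff_k lam α hα]

lemma tgt_eq : tgt lam α = C (∏ i, α i) * ∏ q, (X - C (lam q)) := by
  rw [tgt]
  simp only [pb]
  rw [Finset.prod_mul_distrib, ← map_prod]
  congr 1
  rw [← Equiv.prod_comp (finProdFinEquiv (m := n) (n := k)) (fun q => X - C (lam q)),
    Fintype.prod_prod_type]

lemma tgt_natDegree (hα : ∀ r, 0 < α r) : (tgt lam α).natDegree = n * k := by
  rw [tgt, natDegree_prod _ _ fun i _ => pb_ne_zero lam α hα i]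
  simp [pb_natDegree lam α hα, Finset.sum_const]

lemma tgt_leadingCoeff (hα : ∀ r, 0 < α r) : (tgt lam α).leadingCoeff = ∏ i, α i := by
  rw [tgt, leadingCoeff_prod]
  exact Finset.prod_congr rfl fun i _ => pb_leadingCoeff lam α hα i

end Main


section Main2

variable (lam : Fin (n * k) → ℝ) (α : Fin n → ℝ) (G : Fin k → SimpleGraph (Fin n))

/-- coefficient discrepancy functions -/
def Phi (x : V n k) (m : ℕ) : ℝ := (Mx α G x).det.coeff m - (tgt lam α).coeff m

/-- the map for the inverse function theorem -/
def fmap (x : V n k) : V n k :=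
  fun w => match w with
  | none => x none
  | some v => Phi lam α G x (finProdFinEquiv v)

lemma fmap_none (x : V n k) : fmap lam α G x none = x none := rfl

lemma fmap_some (x : V n k) (v : Fin n × Fin k) :
    fmap lam α G x (some v) = Phi lam α G x (finProdFinEquiv v) := rfl

lemma fmap_comp_eval (v : Fin n × Fin k) : (fun y : V n k => fmap lam α G y (some v)) =
    fun y => MvPolynomial.eval y ((Msym α G (n := n)).det.coeff (finProdFinEquiv v))
      - (tgt lam α).coeff (finProdFinEquiv v) := by
  funext y
  rw [fmap_some, Phi, det_Mx_coeff]

lemma analyticAt_fmap (x : V n k) : AnalyticAt ℝ (fmap lam α G) x := by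
  have : ∀ w : σt n k, AnalyticAt ℝ (fun y => fmap lam α G y w) x := by
    intro w
    match w with
    | none =>
      exact (ContinuousLinearMap.proj (R := ℝ) (φ := fun _ : σt n k => ℝ) none).analyticAt x
    | some v =>
      rw [fmap_comp_eval]
      exact ((AnalyticOnNhd.eval_mvPolynomial _) x trivial).sub analyticAt_const
  exact AnalyticAt.pi this

/-- when the coupling variable vanishes, the matrix is diagonal -/
lemma Mx_diagonal {x : V n k} (hx : x none = 0) :
    Mx α G x = Matrix.diagonal (fun i => C (α i) * X ^ k + lower k (fun s => x (some (i, s)))) := by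
  refine Matrix.ext fun i j => ?_
  rcases eq_or_ne i j with rfl | hij
  · rw [Mx_diag, Matrix.diagonal_apply_eq]
  · rw [Mx_off α G x hij, Matrix.diagonal_apply_ne _ hij, hx]
    simpa using lower_zero (k := k)

lemma Phi_diagonal {x : V n k} (hx : x none = 0) (m : ℕ) :
    Phi lam α G x m =
      (∏ i, (C (α i) * X ^ k + lower k (fun s => x (some (i, s))))).coeff m
        - (tgt lam α).coeff m := by
  rw [Phi, Mx_diagonal α G hx, Matrix.det_diagonal]

end Main2


section Main3

variable (lam : Fin (n * k) → ℝ) (α : Fin n → ℝ) (G : Fin k → SimpleGraph (Fin n))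

lemma natDegree_lower_le' (c : Fin k → ℝ) : (lower k c).natDegree ≤ k := by
  rcases Nat.eq_zero_or_pos k with h | h
  · subst h; simp [lower]
  · exact (natDegree_lower_le c h).trans (by omega)

lemma Mx_diag_coeff_k (x : V n k) (i : Fin n) : (Mx α G x i i).coeff k = α i := by
  rw [Mx_diag, coeff_add, coeff_C_mul, coeff_X_pow, if_pos rfl, coeff_lower_ge _ le_rfl]
  ring

lemma Mx_diag_natDegree (hα : ∀ r, 0 < α r) (x : V n k) (i : Fin n) :
    (Mx α G x i i).natDegree = k := by
  refine le_antisymm ?_ (le_natDegree_of_ne_zero (by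
    rw [Mx_diag_coeff_k]; exact (hα i).ne'))
  rw [Mx_diag]
  refine (natDegree_add_le _ _).trans (max_le ?_ (natDegree_lower_le' _))
  exact (natDegree_C_mul_le _ _).trans (by rw [natDegree_X_pow])

lemma Mx_diag_ne_zero (hα : ∀ r, 0 < α r) (x : V n k) (i : Fin n) : Mx α G x i i ≠ 0 := by
  intro h
  have := Mx_diag_coeff_k α G x i
  rw [h, coeff_zero] at this
  exact (hα i).ne this

lemma Mx_off_natDegree (hk : 0 < k) (x : V n k) {i j : Fin n} (hij : i ≠ j) :
    (Mx α G x i j).natDegree ≤ k - 1 := by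
  rw [Mx_off α G x hij]
  exact natDegree_lower_le _ hk

lemma prod_perm_natDegree (hk : 0 < k) (hα : ∀ r, 0 < α r) (x : V n k)
    {σ : Equiv.Perm (Fin n)} (hσ : σ ≠ 1) :
    (∏ i, Mx α G x (σ i) i).natDegree ≤ n * k - 1 := by
  obtain ⟨i₀, hi₀⟩ : ∃ i, σ i ≠ i := by
    by_contra h
    push_neg at h
    exact hσ (Equiv.ext h)
  have hn : 0 < n := i₀.pos
  refine (natDegree_prod_le _ _).trans ?_
  have hbound : ∀ i : Fin n, (Mx α G x (σ i) i).natDegree ≤ if σ i = i then k else k - 1 := by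
    intro i
    split
    · next h => rw [h, Mx_diag_natDegree α G hα]
    · next h => exact Mx_off_natDegree α G hk x h
  refine (Finset.sum_le_sum fun i _ => hbound i).trans ?_
  rw [← Finset.add_sum_erase _ _ (Finset.mem_univ i₀), if_neg hi₀]
  have h2 : ∑ i ∈ Finset.univ.erase i₀, (if σ i = i then k else k - 1) ≤ (n - 1) * k := by
    refine (Finset.sum_le_sum fun i _ => (by split <;> omega : (if σ i = i then k else k - 1) ≤ k)).trans ?_
    rw [Finset.sum_const, Finset.card_erase_of_mem (Finset.mem_univ i₀), Finset.card_univ,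
      Fintype.card_fin, smul_eq_mul]
  have h3 : (n - 1) * k + k = n * k := by
    rcases n with _ | n'
    · omega
    · simp [Nat.succ_mul]
  omega

lemma det_sub_prod_natDegree (hk : 0 < k) (hα : ∀ r, 0 < α r) (x : V n k) :
    ((Mx α G x).det - ∏ i, Mx α G x i i).natDegree ≤ n * k - 1 := by
  rw [Matrix.det_apply']
  rw [← Finset.add_sum_erase _ _ (Finset.mem_univ (1 : Equiv.Perm (Fin n)))]
  simp only [Equiv.Perm.sign_one, Units.val_one, Int.cast_one, one_mul, Equiv.Perm.one_apply]
  rw [add_sub_cancel_left]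
  refine natDegree_sum_le_of_forall_le _ _ fun σ hσ => ?_
  have hσ1 : σ ≠ 1 := Finset.ne_of_mem_erase hσ
  refine (natDegree_mul_le).trans ?_
  rw [natDegree_intCast]
  simpa using prod_perm_natDegree α G hk hα x hσ1

lemma det_eq_tgt (hn : 0 < n) (hk : 0 < k) (hα : ∀ r, 0 < α r) (x : V n k)
    (h : ∀ m, m < n * k → (Mx α G x).det.coeff m = (tgt lam α).coeff m) :
    (Mx α G x).det = tgt lam α := by
  have hPDdeg : (∏ i, Mx α G x i i).natDegree = n * k := by
    rw [natDegree_prod _ _ fun i _ => Mx_diag_ne_zero α G hα x i]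
    simp [Mx_diag_natDegree α G hα x]
  have hPDlead : (∏ i, Mx α G x i i).coeff (n * k) = ∏ i, α i := by
    rw [← hPDdeg, coeff_natDegree, leadingCoeff_prod]
    refine Finset.prod_congr rfl fun i _ => ?_
    rw [Polynomial.leadingCoeff, Mx_diag_natDegree α G hα, Mx_diag_coeff_k]
  have htgthigh : ∀ m, n * k ≤ m → (tgt lam α).coeff m = (∏ i, Mx α G x i i).coeff m := by
    intro m hm
    rcases eq_or_lt_of_le hm with rfl | hm'
    · rw [hPDlead, ← tgt_leadingCoeff lam α hα, Polynomial.leadingCoeff, tgt_natDegree lam α hα]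
    · rw [coeff_eq_zero_of_natDegree_lt (by rw [tgt_natDegree lam α hα]; exact hm'),
        coeff_eq_zero_of_natDegree_lt (by rw [hPDdeg]; exact hm')]
  ext m
  rcases lt_or_ge m (n * k) with hm | hm
  · exact h m hm
  · have hdiff : ((Mx α G x).det - ∏ i, Mx α G x i i).coeff m = 0 := by
      refine coeff_eq_zero_of_natDegree_lt ?_
      refine lt_of_le_of_lt (det_sub_prod_natDegree α G hk hα x) ?_
      have : 0 < n * k := Nat.mul_pos hn hk
      omega
    rw [coeff_sub, sub_eq_zero] at hdiff
    rw [hdiff, htgthigh m hm]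

end Main3


section Main4

variable (lam : Fin (n * k) → ℝ) (α : Fin n → ℝ) (G : Fin k → SimpleGraph (Fin n))

/-- the base point -/
def xstar : V n k := fun w => match w with
  | none => 0
  | some v => (pb lam α v.1).coeff v.2

lemma xstar_none : xstar lam α none = 0 := rfl

lemma xstar_some (i : Fin n) (s : Fin k) :
    xstar lam α (some (i, s)) = (pb lam α i).coeff s := rfl

/-- direction polynomials -/
def qpoly (u : V n k) (i : Fin n) : ℝ[X] := lower k (fun s => u (some (i, s)))

/-- the derivative polynomial in direction u -/
def Tpoly (u : V n k) : ℝ[X] :=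
  ∑ i : Fin n, qpoly u i * ∏ j ∈ Finset.univ.erase i, pb lam α j

lemma pb_pairwise_coprime (hlam : Function.Injective lam) (hα : ∀ r, 0 < α r)
    {i j : Fin n} (hij : i ≠ j) : IsCoprime (pb lam α i) (pb lam α j) := by
  rw [pb, pb, isCoprime_mul_unit_left_left (isUnit_C.2 (hα i).ne'.isUnit),
    isCoprime_mul_unit_left_right (isUnit_C.2 (hα j).ne'.isUnit)]
  refine IsCoprime.prod_left fun m1 _ => IsCoprime.prod_right fun m2 _ => ?_
  refine Polynomial.pairwise_coprime_X_sub_C hlam ?_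
  intro h
  exact hij (congrArg Prod.fst (finProdFinEquiv.injective h))

lemma kernel_trivial (hk : 0 < k) (hlam : Function.Injective lam) (hα : ∀ r, 0 < α r)
    (u : V n k) (hcoeff : ∀ m, m < n * k → (Tpoly lam α u).coeff m = 0) :
    ∀ i s, u (some (i, s)) = 0 := by
  intro i s
  have hn : 0 < n := i.pos
  -- the polynomial vanishes
  have hdeg : (Tpoly lam α u).natDegree ≤ n * k - 1 := by
    refine natDegree_sum_le_of_forall_le _ _ fun i' _ => ?_
    refine natDegree_mul_le.trans ?_
    have h1 : (qpoly u i').natDegree ≤ k - 1 := natDegree_lower_le _ hk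
    have h2 : (∏ j ∈ Finset.univ.erase i', pb lam α j).natDegree ≤ (n - 1) * k := by
      refine (natDegree_prod_le _ _).trans ?_
      refine (Finset.sum_le_sum fun j _ => (pb_natDegree lam α hα j).le).trans ?_
      rw [Finset.sum_const, Finset.card_erase_of_mem (Finset.mem_univ i'), Finset.card_univ,
        Fintype.card_fin, smul_eq_mul]
    have h3 : (n - 1) * k + k = n * k := by
      rcases n with _ | n'
      · omega
      · simp [Nat.succ_mul]
    omega
  have hT0 : Tpoly lam α u = 0 := by
    ext m
    rcases lt_or_ge m (n * k) with hm | hm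
    · rw [hcoeff m hm, coeff_zero]
    · rw [coeff_zero]
      refine coeff_eq_zero_of_natDegree_lt ?_
      have : 0 < n * k := Nat.mul_pos hn hk
      omega
  -- coprimality
  have hcop : IsCoprime (pb lam α i) (∏ j ∈ Finset.univ.erase i, pb lam α j) :=
    IsCoprime.prod_right fun j hj =>
      pb_pairwise_coprime lam α hlam hα (Finset.ne_of_mem_erase hj).symm
  -- divisibility
  have hdvd : pb lam α i ∣ qpoly u i * ∏ j ∈ Finset.univ.erase i, pb lam α j := by
    have hsplit : qpoly u i * ∏ j ∈ Finset.univ.erase i, pb lam α j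
        = - ∑ i' ∈ Finset.univ.erase i,
            qpoly u i' * ∏ j ∈ Finset.univ.erase i', pb lam α j := by
      have := Finset.add_sum_erase Finset.univ
        (fun i' => qpoly u i' * ∏ j ∈ Finset.univ.erase i', pb lam α j) (Finset.mem_univ i)
      rw [← Tpoly, hT0] at this
      simpa using eq_neg_of_add_eq_zero_left this
    rw [hsplit, dvd_neg]
    refine Finset.dvd_sum fun i' hi' => ?_
    refine Dvd.dvd.mul_left ?_ _
    exact Finset.dvd_prod_of_mem _ (Finset.mem_erase.2 ⟨(Finset.ne_of_mem_erase hi').symm, Finset.mem_univ i⟩)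
  have hq0 : qpoly u i = 0 := by
    refine eq_zero_of_dvd_of_natDegree_lt (hcop.dvd_of_dvd_mul_right hdvd) ?_
    rw [pb_natDegree lam α hα]
    exact lt_of_le_of_lt (natDegree_lower_le _ hk) (by omega)
  have := coeff_lower (fun s' => u (some (i, s'))) s
  rw [← qpoly, hq0, coeff_zero] at this
  exact this.symm

end Main4


section Main5

variable (lam : Fin (n * k) → ℝ) (α : Fin n → ℝ) (G : Fin k → SimpleGraph (Fin n))

lemma hasDerivAt_slice (hα : ∀ r, 0 < α r) (u : V n k) (hu : u none = 0) (m : ℕ) :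
    HasDerivAt (fun t : ℝ => Phi lam α G (xstar lam α + t • u) m)
      ((Tpoly lam α u).coeff m) 0 := by
  have hfun : (fun t : ℝ => Phi lam α G (xstar lam α + t • u) m)
      = fun t : ℝ => (∑ S ∈ (Finset.univ : Finset (Fin n)).powerset,
          t ^ S.card * ((∏ i ∈ S, qpoly u i) * ∏ i ∈ Finset.univ \ S, pb lam α i).coeff m)
        - (tgt lam α).coeff m := by
    funext t
    have hnone : (xstar lam α + t • u) none = 0 := by
      simp [xstar_none, hu]
    rw [Phi_diagonal lam α G hnone m]
    congr 1
    have hentry : ∀ i : Fin n,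
        C (α i) * X ^ k + lower k (fun s => (xstar lam α + t • u) (some (i, s)))
        = C t * qpoly u i + pb lam α i := by
      intro i
      have harg : (fun s : Fin k => (xstar lam α + t • u) (some (i, s)))
          = fun s : Fin k => (pb lam α i).coeff (s : ℕ) + t * u (some (i, s)) := by
        funext s
        simp [xstar_some]
      rw [harg, lower_add_smul, ← add_assoc, ← pb_decomp lam α hα i, qpoly, add_comm]
    rw [Finset.prod_congr rfl fun i _ => hentry i, Finset.prod_add, finset_sum_coeff]
    refine Finset.sum_congr rfl fun S _ => ?_
    rw [Finset.prod_mul_distrib, Finset.prod_const, ← C_pow, mul_assoc, coeff_C_mul]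
  rw [hfun]
  have hsum : HasDerivAt (fun t : ℝ => ∑ S ∈ (Finset.univ : Finset (Fin n)).powerset,
        t ^ S.card * ((∏ i ∈ S, qpoly u i) * ∏ i ∈ Finset.univ \ S, pb lam α i).coeff m)
      (∑ S ∈ (Finset.univ : Finset (Fin n)).powerset,
        if S.card = 1 then ((∏ i ∈ S, qpoly u i) * ∏ i ∈ Finset.univ \ S, pb lam α i).coeff m
        else 0) 0 := by
    refine HasDerivAt.fun_sum fun S _ => ?_
    have h := (hasDerivAt_pow S.card (0:ℝ)).mul_const
      (((∏ i ∈ S, qpoly u i) * ∏ i ∈ Finset.univ \ S, pb lam α i).coeff m)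
    convert h using 1
    · rfl
    rcases hc : S.card with _ | c
    · simp
    · rcases c with _ | c
      · simp
      · simp [pow_succ]
  have hval : (∑ S ∈ (Finset.univ : Finset (Fin n)).powerset,
        if S.card = 1 then ((∏ i ∈ S, qpoly u i) * ∏ i ∈ Finset.univ \ S, pb lam α i).coeff m
        else 0) = (Tpoly lam α u).coeff m := by
    rw [← Finset.sum_filter, ← Finset.powersetCard_eq_filter, Finset.powersetCard_one,
      Finset.sum_map, Tpoly, finset_sum_coeff]
    refine Finset.sum_congr rfl fun i _ => ?_
    simp [Finset.erase_eq]
  exact hval ▸ (hsum.sub_const _)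

end Main5


section Main6

variable (lam : Fin (n * k) → ℝ) (α : Fin n → ℝ) (G : Fin k → SimpleGraph (Fin n))

lemma Phi_xstar (hα : ∀ r, 0 < α r) (m : ℕ) : Phi lam α G (xstar lam α) m = 0 := by
  rw [Phi, Mx_diagonal α G (xstar_none lam α), Matrix.det_diagonal, sub_eq_zero, tgt]
  exact congrArg (fun p : ℝ[X] => p.coeff m) (Finset.prod_congr rfl fun i _ => (pb_decomp lam α hα i).symm)

lemma fmap_xstar (hα : ∀ r, 0 < α r) : fmap lam α G (xstar lam α) = 0 := by
  funext w
  match w with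
  | none => exact xstar_none lam α
  | some v => exact Phi_xstar lam α G hα _

lemma exists_solution (hn : 0 < n) (hk : 0 < k) (hlam : Function.Injective lam) (hα : ∀ r, 0 < α r) :
    ∃ x : V n k, x none ≠ 0 ∧ (Mx α G x).det = tgt lam α := by
  classical
  set F := fmap lam α G with hF
  set x₀ := xstar lam α with hx₀
  have hA : AnalyticAt ℝ F x₀ := analyticAt_fmap lam α G x₀
  have hstrict : HasStrictFDerivAt F (fderiv ℝ F x₀) x₀ := hA.hasStrictFDerivAt
  set L := fderiv ℝ F x₀ with hL
  have hFD : HasFDerivAt F L x₀ := hstrict.hasFDerivAt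
  -- componentwise derivatives
  have hFDw : ∀ w : σt n k, HasFDerivAt (fun x => F x w)
      ((ContinuousLinearMap.proj w).comp L) x₀ := by
    intro w
    exact (ContinuousLinearMap.proj (R := ℝ) (φ := fun _ : σt n k => ℝ) w).hasFDerivAt.comp x₀ hFD
  -- L kills only 0
  have hker : ∀ u : V n k, L u = 0 → u = 0 := by
    intro u hu
    have hnone : u none = 0 := by
      have h1 : HasFDerivAt (fun x : V n k => F x none)
          ((ContinuousLinearMap.proj none).comp L) x₀ := hFDw none
      have h2 : HasFDerivAt (fun x : V n k => F x none)
          (ContinuousLinearMap.proj (R := ℝ) (φ := fun _ : σt n k => ℝ) none) x₀ :=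
        (ContinuousLinearMap.proj (R := ℝ) (φ := fun _ : σt n k => ℝ) none).hasFDerivAt
      have h3 := h1.unique h2
      have h4 := congrArg (fun T : (V n k) →L[ℝ] ℝ => T u) h3
      simp only [ContinuousLinearMap.comp_apply, ContinuousLinearMap.proj_apply] at h4
      rw [hu] at h4
      simpa using h4.symm
    -- directional derivative along u
    have hdir : ∀ v : Fin n × Fin k,
        (Tpoly lam α u).coeff ((finProdFinEquiv v : Fin (n * k)) : ℕ) = 0 := by
      intro v
      have hline : HasDerivAt (fun t : ℝ => x₀ + t • u) u 0 := by
        have h := ((hasDerivAt_id (0:ℝ)).smul_const u).const_add x₀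
        simpa using h
      have hcomp : HasDerivAt (fun t : ℝ => F (x₀ + t • u) (some v))
          (((ContinuousLinearMap.proj (some v)).comp L) u) 0 := by
        have h0 : x₀ + (0:ℝ) • u = x₀ := by simp
        have := (h0 ▸ hFDw (some v)).comp_hasDerivAt 0 hline
        exact this
      have hslice := hasDerivAt_slice lam α G hα u hnone
        ((finProdFinEquiv v : Fin (n * k)) : ℕ)
      have hfun : (fun t : ℝ => F (x₀ + t • u) (some v))
          = fun t : ℝ => Phi lam α G (xstar lam α + t • u)
              ((finProdFinEquiv v : Fin (n * k)) : ℕ) := rfl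
      rw [hfun] at hcomp
      have := hcomp.unique hslice
      rw [← this]
      simp only [ContinuousLinearMap.comp_apply, ContinuousLinearMap.proj_apply, hu]
      rfl
    have hzero : ∀ i s, u (some (i, s)) = 0 := by
      refine kernel_trivial lam α hk hlam hα u fun m hm => ?_
      have := hdir (finProdFinEquiv.symm ⟨m, hm⟩)
      rwa [Equiv.apply_symm_apply] at this
    funext w
    match w with
    | none => exact hnone
    | some (i, s) => exact hzero i s
  -- L is a linear equivalence
  have hinj : Function.Injective L := by
    intro a b hab
    have : L (a - b) = 0 := by rw [map_sub, hab, sub_self]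
    have := hker _ this
    exact sub_eq_zero.mp this
  have hsurj : Function.Surjective L := by
    have h := (LinearMap.injective_iff_surjective (f := (L : V n k →ₗ[ℝ] V n k))).mp hinj
    exact h
  let LE : V n k ≃L[ℝ] V n k :=
    LinearEquiv.toContinuousLinearEquiv (LinearEquiv.ofBijective (L : V n k →ₗ[ℝ] V n k) ⟨hinj, hsurj⟩)
  have hcoe : (LE : V n k →L[ℝ] V n k) = L := by
    ext u
    rfl
  have hstrict' : HasStrictFDerivAt F (LE : V n k →L[ℝ] V n k) x₀ := by
    rw [hcoe]; exact hstrict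
  -- local inverse
  set g := hstrict'.localInverse F LE x₀ with hg
  have hright : ∀ᶠ y in nhds (F x₀), F (g y) = y := hstrict'.eventually_right_inverse
  have h00 : F x₀ = 0 := fmap_xstar lam α G hα
  rw [h00] at hright
  set yfun : ℝ → V n k := fun t => Pi.single none t with hyfun
  have hcont : Continuous yfun := by
    refine continuous_pi fun w => ?_
    simp only [hyfun, Pi.single_apply]
    rcases eq_or_ne w none with rfl | hw
    · simpa using continuous_id'
    · simp [hw]
      exact continuous_const
  have htend : Filter.Tendsto yfun (nhds 0) (nhds 0) := by
    have := hcont.tendsto 0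
    rwa [show yfun 0 = 0 by simp [hyfun]] at this
  have hev : ∀ᶠ t in nhds (0:ℝ), F (g (yfun t)) = yfun t := htend.eventually hright
  obtain ⟨t, ht, htne⟩ := ((hev.filter_mono nhdsWithin_le_nhds).and
    (eventually_mem_nhdsWithin (s := {(0:ℝ)}ᶜ) (a := 0))).exists
  refine ⟨g (yfun t), ?_, ?_⟩
  · have := congrFun ht none
    have hl : F (g (yfun t)) none = g (yfun t) none := rfl
    rw [hl] at this
    rw [this]
    simpa [hyfun] using htne
  · refine det_eq_tgt lam α G hn hk hα _ fun m hm => ?_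
    have hv := congrFun ht (some (finProdFinEquiv.symm ⟨m, hm⟩))
    have hl : F (g (yfun t)) (some (finProdFinEquiv.symm ⟨m, hm⟩))
        = Phi lam α G (g (yfun t)) ((finProdFinEquiv (finProdFinEquiv.symm ⟨m, hm⟩) : Fin (n*k)) : ℕ) := rfl
    rw [hl, Equiv.apply_symm_apply] at hv
    have hr : yfun t (some (finProdFinEquiv.symm ⟨m, hm⟩)) = 0 := by
      simp [hyfun, Pi.single_apply]
    rw [hr] at hv
    have : Phi lam α G (g (yfun t)) m = 0 := hv
    rw [Phi, sub_eq_zero] at this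
    exact this

end Main6

end

end Stmt10


open Stmt10

/-- Main existence theorem: given `nk` distinct real numbers, positive numbers
`α r`, and graphs `G s`, there are real symmetric matrices `A s` whose graphs
are the `G s`, such that the matrix polynomial with leading coefficient
`diag(α)` and lower coefficients `A s` has exactly the given numbers as the
zeros of its determinant. -/
theorem stmt_10 (n k : ℕ) (hk : 0 < k)
    (lam : Fin (n * k) → ℝ) (hlam : Function.Injective lam)
    (α : Fin n → ℝ) (hα : ∀ r, 0 < α r)
    (G : Fin k → SimpleGraph (Fin n)) :
    ∃ A : Fin k → Matrix (Fin n) (Fin n) ℝ,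
      (∀ s, (A s).IsSymm) ∧
      (∀ s, ∀ i j : Fin n, i ≠ j → ((A s i j ≠ 0) ↔ (G s).Adj i j)) ∧
      (∀ z : ℝ,
        (Matrix.det (Matrix.of fun i j : Fin n =>
          (if i = j then Polynomial.C (α i) * Polynomial.X ^ k else 0) +
            ∑ s : Fin k, Polynomial.C (A s i j) * Polynomial.X ^ (s : ℕ))).eval z
          = 0 ↔ ∃ q, lam q = z) := by
  rcases Nat.eq_zero_or_pos n with hn | hn
  · subst hn
    refine ⟨fun _ => 0, fun s => Matrix.ext fun i j => i.elim0, fun s i => i.elim0, fun z => ?_⟩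
    rw [Matrix.det_fin_zero, eval_one]
    constructor
    · intro h; exact absurd h one_ne_zero
    · rintro ⟨q, -⟩
      have := q.isLt
      omega
  · obtain ⟨x, hx0, hxdet⟩ := Stmt10.exists_solution lam α G hn hk hlam hα
    set A : Fin k → Matrix (Fin n) (Fin n) ℝ :=
      fun s => Matrix.of fun i j => if i = j then x (some (i, s)) else x none * ind G s i j with hA
    refine ⟨A, ?_, ?_, ?_⟩
    · intro s
      refine Matrix.ext fun i j => ?_
      rw [Matrix.transpose_apply]
      simp only [hA, Matrix.of_apply]
      rcases eq_or_ne i j with rfl | hij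
      · rfl
      · rw [if_neg (Ne.symm hij), if_neg hij, ind_symm]
    · intro s i j hij
      simp only [hA, Matrix.of_apply, if_neg hij]
      rw [mul_ne_zero_iff]
      constructor
      · rintro ⟨-, h⟩
        exact (ind_ne_zero_iff G s i j).mp h
      · intro h
        exact ⟨hx0, (ind_ne_zero_iff G s i j).mpr h⟩
    · intro z
      have hM : (Matrix.of fun i j : Fin n =>
          (if i = j then Polynomial.C (α i) * Polynomial.X ^ k else 0) +
            ∑ s : Fin k, Polynomial.C (A s i j) * Polynomial.X ^ (s : ℕ)) = Mx α G x := by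
        refine Matrix.ext fun i j => ?_
        simp only [hA, Matrix.of_apply]
        rcases eq_or_ne i j with rfl | hij
        · rw [Mx_diag]
          simp [lower]
        · rw [Mx_off α G x hij]
          simp [hij, lower]
      rw [hM, hxdet, tgt_eq]
      rw [eval_mul, eval_C, eval_prod]
      simp only [eval_sub, eval_X, eval_C]
      have hαne : (∏ i, α i) ≠ 0 := (Finset.prod_pos fun i _ => hα i).ne'
      constructor
      · intro h
        rcases mul_eq_zero.mp h with h | h
        · exact absurd h hαne
        · obtain ⟨q, -, hq⟩ := Finset.prod_eq_zero_iff.mp h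
          exact ⟨q, (sub_eq_zero.mp hq).symm⟩
      · rintro ⟨q, hq⟩
        rw [mul_eq_zero]
        exact Or.inr (Finset.prod_eq_zero (Finset.mem_univ q) (by rw [hq, sub_self]))
end

section
/- Given simple graphs G and H on n vertices, a positive definite diagonal n×n real matrix M, and 2n distinct real numbers λ_1, ..., λ_{2n}, there exist real symmetric n×n matrices D and K whose graphs are H and G respectively, such that the quadratic matrix polynomial L(z) = M z^2 + D z + K satisfies: the set of zeros of det L(z) is exactly {λ_1, ..., λ_{2n}}. -/
open Finset in
private lemma det_update_diag {n : ℕ} (w : Fin n → ℝ) (i : Fin n) (r : Fin n → ℝ) :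
    (Matrix.of (Function.update (fun a b => if a = b then w a else 0) i r)).det
      = r i * ∏ j ∈ Finset.univ.erase i, w j := by
  classical
  rw [Matrix.det_apply']
  rw [Finset.sum_eq_single (1 : Equiv.Perm (Fin n))]
  · simp only [Equiv.Perm.sign_one, Units.val_one, Int.cast_one, one_mul, Equiv.Perm.coe_one,
      id_eq]
    rw [← Finset.mul_prod_erase Finset.univ _ (Finset.mem_univ i)]
    congr 1
    · simp
    · refine Finset.prod_congr rfl fun j hj => ?_
      have hji : j ≠ i := (Finset.mem_erase.1 hj).1
      simp [Function.update_of_ne hji]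
  · intro σ _ hσ
    obtain ⟨bb, hbb⟩ : ∃ x, σ x ≠ x := by
      by_contra h; push_neg at h; exact hσ (Equiv.ext h)
    convert mul_zero _
    by_cases hbi : σ bb = i
    · have hii : σ i ≠ i := by
        intro h
        exact hbb (by rw [σ.injective (hbi.trans h.symm)]; exact h)
      apply Finset.prod_eq_zero (Finset.mem_univ i)
      simp [Function.update_of_ne hii, if_neg hii]
    · apply Finset.prod_eq_zero (Finset.mem_univ bb)
      simp [Function.update_of_ne hbi, if_neg hbb]
  · simp

private noncomputable def detCML (n : ℕ) :
    ContinuousMultilinearMap ℝ (fun _ : Fin n => Fin n → ℝ) ℝ :=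
  { (Matrix.detRowAlternating : (Fin n → ℝ) [⋀^Fin n]→ₗ[ℝ] ℝ).toMultilinearMap with
    cont := by
      have h : Continuous fun M : Matrix (Fin n) (Fin n) ℝ => M.det :=
        Continuous.matrix_det continuous_id
      exact h }

private lemma detCML_apply {n : ℕ} (v : Fin n → Fin n → ℝ) :
    detCML n v = (Matrix.of v).det := rfl

private def aIdx (n : ℕ) (i : Fin n) : Fin (2 * n) := ⟨2 * i.val, by have := i.isLt; omega⟩
private def bIdx (n : ℕ) (i : Fin n) : Fin (2 * n) := ⟨2 * i.val + 1, by have := i.isLt; omega⟩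
private def prIdx (n : ℕ) (q : Fin (2 * n)) : Fin n := ⟨q.val / 2, by have := q.isLt; omega⟩

private lemma pr_a {n : ℕ} (i : Fin n) : prIdx n (aIdx n i) = i := by
  simp only [Fin.ext_iff, prIdx, aIdx]; omega

private lemma pr_b {n : ℕ} (i : Fin n) : prIdx n (bIdx n i) = i := by
  simp only [Fin.ext_iff, prIdx, bIdx]; omega

private lemma a_or_b {n : ℕ} (q : Fin (2 * n)) :
    aIdx n (prIdx n q) = q ∨ bIdx n (prIdx n q) = q := by
  simp only [Fin.ext_iff, prIdx, aIdx, bIdx]; omega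

private lemma a_ne_b {n : ℕ} (i : Fin n) : aIdx n i ≠ bIdx n i := by
  intro h
  rw [Fin.ext_iff] at h
  simp only [aIdx, bIdx] at h
  omega

private def Qf {n : ℕ} (m : Fin n → ℝ) (lam : Fin (2 * n) → ℝ) (i : Fin n) (z : ℝ) : ℝ :=
  m i * ((z - lam (aIdx n i)) * (z - lam (bIdx n i)))

private lemma Qf_root {n : ℕ} (m : Fin n → ℝ) (lam : Fin (2 * n) → ℝ) (q : Fin (2 * n)) :
    Qf m lam (prIdx n q) (lam q) = 0 := by
  rcases a_or_b q with h | h <;> rw [Qf, h] <;> ring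

private lemma Qf_ne {n : ℕ} {m : Fin n → ℝ} {lam : Fin (2 * n) → ℝ}
    (hm : ∀ i, m i ≠ 0) (hlam : Function.Injective lam) {q : Fin (2 * n)} {i : Fin n}
    (hi : i ≠ prIdx n q) : Qf m lam i (lam q) ≠ 0 := by
  refine mul_ne_zero (hm i) (mul_ne_zero (sub_ne_zero.2 ?_) (sub_ne_zero.2 ?_))
  · intro h
    exact hi (by rw [← pr_a i, ← hlam h])
  · intro h
    exact hi (by rw [← pr_b i, ← hlam h])

private abbrev EE (n : ℕ) : Type := ℝ × (Fin n → ℝ) × (Fin n → ℝ)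

private noncomputable def rowBC (n : ℕ) (c : ℝ) (AH AG : Fin n → Fin n → ℝ) :
    EE n →L[ℝ] (Fin n → Fin n → ℝ) :=
  LinearMap.toContinuousLinearMap
    { toFun := fun x => fun i j =>
        (if i = j then c * x.2.1 i + x.2.2 i else 0) + x.1 * (c * AH i j + AG i j)
      map_add' := by
        intro x y
        funext i j
        simp only [Prod.fst_add, Prod.snd_add, Pi.add_apply]
        split_ifs <;> ring
      map_smul' := by
        intro r x
        funext i j
        simp only [Prod.smul_fst, Prod.smul_snd, Pi.smul_apply, smul_eq_mul, RingHom.id_apply]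
        split_ifs <;> ring }

private lemma rowBC_apply {n : ℕ} (c : ℝ) (AH AG : Fin n → Fin n → ℝ) (x : EE n)
    (i j : Fin n) :
    rowBC n c AH AG x i j
      = (if i = j then c * x.2.1 i + x.2.2 i else 0) + x.1 * (c * AH i j + AG i j) := rfl

private def CmatF (n : ℕ) (m : Fin n → ℝ) (c : ℝ) : Fin n → Fin n → ℝ :=
  fun i j => if i = j then c ^ 2 * m i else 0

private noncomputable def MatF (n : ℕ) (m : Fin n → ℝ) (lam : Fin (2 * n) → ℝ)
    (AH AG : Fin n → Fin n → ℝ) (x : EE n) (q : Fin (2 * n)) : Fin n → Fin n → ℝ :=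
  CmatF n m (lam q) + rowBC n (lam q) AH AG x

private noncomputable def basePt (n : ℕ) (m : Fin n → ℝ) (lam : Fin (2 * n) → ℝ) : EE n :=
  (0, fun i => m i * (-lam (aIdx n i) - lam (bIdx n i)),
      fun i => m i * (lam (aIdx n i) * lam (bIdx n i)))

private noncomputable def Phi (n : ℕ) (m : Fin n → ℝ) (lam : Fin (2 * n) → ℝ)
    (AH AG : Fin n → Fin n → ℝ) : EE n → ℝ × (Fin (2 * n) → ℝ) :=
  fun x => (x.1, fun q => detCML n (MatF n m lam AH AG x q))

private noncomputable def Acl (n : ℕ) (m : Fin n → ℝ) (lam : Fin (2 * n) → ℝ)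
    (AH AG : Fin n → Fin n → ℝ) : EE n →L[ℝ] ℝ × (Fin (2 * n) → ℝ) :=
  (ContinuousLinearMap.fst ℝ ℝ ((Fin n → ℝ) × (Fin n → ℝ))).prod
    (ContinuousLinearMap.pi fun q =>
      ((detCML n).linearDeriv (MatF n m lam AH AG (basePt n m lam) q)).comp
        (rowBC n (lam q) AH AG))

private lemma MatF_base {n : ℕ} (m : Fin n → ℝ) (lam : Fin (2 * n) → ℝ)
    (AH AG : Fin n → Fin n → ℝ) (q : Fin (2 * n)) :
    MatF n m lam AH AG (basePt n m lam) q
      = fun a b => if a = b then Qf m lam a (lam q) else 0 := by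
  funext a b
  simp only [MatF, Pi.add_apply, CmatF, rowBC_apply, basePt, Qf]
  split_ifs <;> ring

private lemma detCML_base {n : ℕ} (m : Fin n → ℝ) (lam : Fin (2 * n) → ℝ)
    (AH AG : Fin n → Fin n → ℝ) (q : Fin (2 * n)) :
    detCML n (MatF n m lam AH AG (basePt n m lam) q) = 0 := by
  rw [MatF_base, detCML_apply]
  have : (Matrix.of fun a b => if a = b then Qf m lam a (lam q) else 0)
      = Matrix.diagonal fun a => Qf m lam a (lam q) := rfl
  rw [this, Matrix.det_diagonal]
  exact Finset.prod_eq_zero (Finset.mem_univ (prIdx n q)) (Qf_root m lam q)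

private lemma Phi_base {n : ℕ} (m : Fin n → ℝ) (lam : Fin (2 * n) → ℝ)
    (AH AG : Fin n → Fin n → ℝ) :
    Phi n m lam AH AG (basePt n m lam) = (0, 0) := by
  refine Prod.ext rfl ?_
  funext q
  exact detCML_base m lam AH AG q

private lemma Phi_hasFDerivAt {n : ℕ} (m : Fin n → ℝ) (lam : Fin (2 * n) → ℝ)
    (AH AG : Fin n → Fin n → ℝ) :
    HasFDerivAt (Phi n m lam AH AG) (Acl n m lam AH AG) (basePt n m lam) := by
  refine HasFDerivAt.prodMk (hasFDerivAt_fst) ?_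
  refine hasFDerivAt_pi.2 fun q => ?_
  exact ((detCML n).hasFDerivAt (MatF n m lam AH AG (basePt n m lam) q)).comp
    (basePt n m lam)
    (((rowBC n (lam q) AH AG).hasFDerivAt).const_add (CmatF n m (lam q)))

private lemma Phi_contDiff {n : ℕ} (m : Fin n → ℝ) (lam : Fin (2 * n) → ℝ)
    (AH AG : Fin n → Fin n → ℝ) :
    ContDiff ℝ 1 (Phi n m lam AH AG) := by
  refine ContDiff.prodMk contDiff_fst ?_
  refine contDiff_pi.2 fun q => ?_
  exact ((detCML n).contDiff).comp
    (contDiff_const.add (rowBC n (lam q) AH AG).contDiff)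

private noncomputable def ccv (n : ℕ) (m : Fin n → ℝ) (lam : Fin (2 * n) → ℝ)
    (q : Fin (2 * n)) : ℝ :=
  ∏ j ∈ Finset.univ.erase (prIdx n q), Qf m lam j (lam q)

private lemma ccv_ne {n : ℕ} {m : Fin n → ℝ} {lam : Fin (2 * n) → ℝ}
    (hm : ∀ i, m i ≠ 0) (hlam : Function.Injective lam) (q : Fin (2 * n)) :
    ccv n m lam q ≠ 0 := by
  rw [ccv, Finset.prod_ne_zero_iff]
  intro j hj
  exact Qf_ne hm hlam (Finset.mem_erase.1 hj).1

private lemma Acl_apply {n : ℕ} (m : Fin n → ℝ) (lam : Fin (2 * n) → ℝ)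
    (AH AG : Fin n → Fin n → ℝ) (hAH : ∀ i, AH i i = 0) (hAG : ∀ i, AG i i = 0)
    (x : EE n) :
    Acl n m lam AH AG x
      = (x.1, fun q =>
          (lam q * x.2.1 (prIdx n q) + x.2.2 (prIdx n q)) * ccv n m lam q) := by
  refine Prod.ext rfl ?_
  funext q
  show ((detCML n).linearDeriv (MatF n m lam AH AG (basePt n m lam) q))
      (rowBC n (lam q) AH AG x) = _
  rw [ContinuousMultilinearMap.linearDeriv_apply, MatF_base]
  have hterm : ∀ i : Fin n,
      detCML n (Function.update (fun a b => if a = b then Qf m lam a (lam q) else 0) i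
          (rowBC n (lam q) AH AG x i))
        = (lam q * x.2.1 i + x.2.2 i) * ∏ j ∈ Finset.univ.erase i, Qf m lam j (lam q) := by
    intro i
    rw [detCML_apply, det_update_diag]
    congr 1
    rw [rowBC_apply, hAH, hAG, if_pos rfl]
    ring
  rw [Finset.sum_congr rfl fun i _ => hterm i]
  rw [Finset.sum_eq_single (prIdx n q)]
  · rfl
  · intro i _ hi
    have h0 : Qf m lam (prIdx n q) (lam q) = 0 := Qf_root m lam q
    have : (∏ j ∈ Finset.univ.erase i, Qf m lam j (lam q)) = 0 :=
      Finset.prod_eq_zero (Finset.mem_erase.2 ⟨fun h => hi h.symm, Finset.mem_univ _⟩) h0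
    rw [this, mul_zero]
  · intro h
    exact absurd (Finset.mem_univ _) h

private lemma Acl_bijective {n : ℕ} (m : Fin n → ℝ) (lam : Fin (2 * n) → ℝ)
    (AH AG : Fin n → Fin n → ℝ) (hm : ∀ i, m i ≠ 0) (hlam : Function.Injective lam)
    (hAH : ∀ i, AH i i = 0) (hAG : ∀ i, AG i i = 0) :
    Function.Bijective (Acl n m lam AH AG).toLinearMap := by
  have hinj : Function.Injective (Acl n m lam AH AG).toLinearMap := by
    rw [injective_iff_map_eq_zero]
    intro x hx
    rw [ContinuousLinearMap.coe_coe, Acl_apply m lam AH AG hAH hAG, Prod.ext_iff] at hx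
    obtain ⟨h1, h2⟩ := hx
    have h3 : ∀ q, lam q * x.2.1 (prIdx n q) + x.2.2 (prIdx n q) = 0 := by
      intro q
      have := congrFun h2 q
      simp only [Pi.zero_apply] at this
      exact (mul_eq_zero.1 this).resolve_right (ccv_ne hm hlam q)
    have hd : ∀ i, x.2.1 i = 0 ∧ x.2.2 i = 0 := by
      intro i
      have ha := h3 (aIdx n i)
      have hb := h3 (bIdx n i)
      rw [pr_a] at ha
      rw [pr_b] at hb
      have hne : lam (aIdx n i) ≠ lam (bIdx n i) := fun h => a_ne_b i (hlam h)
      have hsub : (lam (aIdx n i) - lam (bIdx n i)) * x.2.1 i = 0 := by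
        linear_combination ha - hb
      have hδ : x.2.1 i = 0 :=
        (mul_eq_zero.1 hsub).resolve_left (sub_ne_zero.2 hne)
      refine ⟨hδ, ?_⟩
      rw [hδ, mul_zero, zero_add] at ha
      exact ha
    have hx1 : x.1 = 0 := h1
    have hx21 : x.2.1 = 0 := funext fun i => (hd i).1
    have hx22 : x.2.2 = 0 := funext fun i => (hd i).2
    exact Prod.ext hx1 (Prod.ext hx21 hx22)
  refine ⟨hinj, ?_⟩
  refine (LinearMap.injective_iff_surjective_of_finrank_eq_finrank ?_).1 hinj
  simp only [Module.finrank_prod, Module.finrank_pi, Module.finrank_self, Fintype.card_fin]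
  omega

private lemma key_exists (n : ℕ) (m : Fin n → ℝ) (hm : ∀ i, m i ≠ 0)
    (lam : Fin (2 * n) → ℝ) (hlam : Function.Injective lam)
    (AH AG : Fin n → Fin n → ℝ) (hAH : ∀ i, AH i i = 0) (hAG : ∀ i, AG i i = 0) :
    ∃ t : ℝ, t ≠ 0 ∧ ∃ d k : Fin n → ℝ, ∀ q : Fin (2 * n),
      ((lam q) ^ 2 • Matrix.diagonal m + lam q • (Matrix.diagonal d + t • Matrix.of AH)
        + (Matrix.diagonal k + t • Matrix.of AG)).det = 0 := by
  classical
  -- upgrade the derivative to a continuous linear equivalence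
  let eqv : EE n ≃ₗ[ℝ] ℝ × (Fin (2 * n) → ℝ) :=
    LinearEquiv.ofBijective (Acl n m lam AH AG).toLinearMap
      (Acl_bijective m lam AH AG hm hlam hAH hAG)
  let ceqv : EE n ≃L[ℝ] ℝ × (Fin (2 * n) → ℝ) := eqv.toContinuousLinearEquiv
  have hco : (ceqv : EE n →L[ℝ] ℝ × (Fin (2 * n) → ℝ)) = Acl n m lam AH AG := by
    ext x <;> rfl
  have hstrict : HasStrictFDerivAt (Phi n m lam AH AG)
      (ceqv : EE n →L[ℝ] ℝ × (Fin (2 * n) → ℝ)) (basePt n m lam) := by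
    refine ((Phi_contDiff m lam AH AG).contDiffAt).hasStrictFDerivAt' ?_ one_ne_zero
    rw [hco]
    exact Phi_hasFDerivAt m lam AH AG
  have hmap := hstrict.map_nhds_eq_of_equiv
  have hrange : Set.range (Phi n m lam AH AG)
      ∈ nhds ((0 : ℝ), (0 : Fin (2 * n) → ℝ)) := by
    rw [← Phi_base m lam AH AG, ← hmap]
    have := Filter.image_mem_map (f := nhds (basePt n m lam))
      (m := Phi n m lam AH AG) Filter.univ_mem
    rwa [Set.image_univ] at this
  obtain ⟨ε, hε, hball⟩ := Metric.mem_nhds_iff.1 hrange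
  have hp : ((ε / 2 : ℝ), (0 : Fin (2 * n) → ℝ))
      ∈ Metric.ball ((0 : ℝ), (0 : Fin (2 * n) → ℝ)) ε := by
    rw [Metric.mem_ball, Prod.dist_eq]
    simp only [dist_self, Real.dist_eq, sub_zero]
    rw [abs_of_pos (half_pos hε)]
    rw [max_eq_left (le_of_lt (half_pos hε))]
    linarith
  obtain ⟨x, hx⟩ := hball hp
  have hx1 : x.1 = ε / 2 := congrArg Prod.fst hx
  have hx2 : ∀ q, detCML n (MatF n m lam AH AG x q) = 0 := by
    intro q
    have := congrFun (congrArg Prod.snd hx) q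
    simpa [Phi] using this
  refine ⟨x.1, by rw [hx1]; positivity, x.2.1, x.2.2, fun q => ?_⟩
  have hM : (lam q) ^ 2 • Matrix.diagonal m
        + lam q • (Matrix.diagonal x.2.1 + x.1 • Matrix.of AH)
        + (Matrix.diagonal x.2.2 + x.1 • Matrix.of AG)
      = Matrix.of (MatF n m lam AH AG x q) := by
    ext i j
    simp only [Matrix.add_apply, Matrix.smul_apply, Matrix.diagonal_apply, Matrix.of_apply,
      smul_eq_mul, MatF, Pi.add_apply, CmatF, rowBC_apply]
    split_ifs <;> ring
  rw [hM, ← detCML_apply]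
  exact hx2 q

open Polynomial in
private lemma root_set_exact (n : ℕ) (m : Fin n → ℝ) (hm : ∀ i, 0 < m i)
    (lam : Fin (2 * n) → ℝ) (hlam : Function.Injective lam)
    (D K : Matrix (Fin n) (Fin n) ℝ)
    (hroot : ∀ q, ((lam q) ^ 2 • Matrix.diagonal m + lam q • D + K).det = 0) (z : ℝ) :
    ((z ^ 2 • Matrix.diagonal m + z • D + K).det = 0 ↔ ∃ q, lam q = z) := by
  classical
  set PM : Matrix (Fin n) (Fin n) ℝ[X] :=
    Matrix.of fun i j => C (Matrix.diagonal m i j) * X ^ 2 + C (D i j) * X + C (K i j) with hPM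
  set P : ℝ[X] := PM.det with hP
  have heval : ∀ w : ℝ, P.eval w = ((w : ℝ) ^ 2 • Matrix.diagonal m + w • D + K).det := by
    intro w
    have h1 := (evalRingHom w).map_det PM
    have h2 : (evalRingHom w).mapMatrix PM
        = (w : ℝ) ^ 2 • Matrix.diagonal m + w • D + K := by
      ext i j
      simp only [RingHom.mapMatrix_apply, Matrix.map_apply, hPM, Matrix.of_apply,
        Matrix.add_apply, Matrix.smul_apply, smul_eq_mul, coe_evalRingHom, eval_add, eval_mul,
        eval_C, eval_pow, eval_X]
      ring
    calc P.eval w = (evalRingHom w) P := rfl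
      _ = ((evalRingHom w).mapMatrix PM).det := h1
      _ = _ := by rw [h2]
  have hentrydeg : ∀ i j : Fin n, (PM i j).natDegree ≤ 2 := by
    intro i j
    rw [hPM]
    simp only [Matrix.of_apply]
    compute_degree
  have hcoeff2 : ∀ i j : Fin n, (PM i j).coeff 2 = Matrix.diagonal m i j := by
    intro i j
    rw [hPM]
    simp [coeff_add, coeff_C_mul, coeff_X_pow, coeff_C, coeff_X]
  have hcoeff : P.coeff (2 * n) = ∏ i, m i := by
    rw [hP, Matrix.det_apply', finset_sum_coeff]
    rw [Finset.sum_eq_single (1 : Equiv.Perm (Fin n))]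
    · have hcp : (∏ i, PM ((1 : Equiv.Perm (Fin n)) i) i).coeff (2 * n) = ∏ i, m i := by
        have := coeff_prod_of_natDegree_le (s := Finset.univ)
          (f := fun i : Fin n => PM ((1 : Equiv.Perm (Fin n)) i) i) 2
          (fun i _ => hentrydeg _ _)
        rw [Finset.card_univ, Fintype.card_fin, mul_comm n 2] at this
        rw [this]
        refine Finset.prod_congr rfl fun i _ => ?_
        rw [hcoeff2, Equiv.Perm.coe_one, id_eq, Matrix.diagonal_apply_eq]
      simpa only [Equiv.Perm.sign_one, Units.val_one, Int.cast_one, one_mul] using hcp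
    · intro σ _ hσ
      obtain ⟨i, hi⟩ : ∃ i, σ i ≠ i := by
        by_contra h; push_neg at h; exact hσ (Equiv.ext h)
      rw [← C_eq_intCast, coeff_C_mul]
      have := coeff_prod_of_natDegree_le (s := Finset.univ)
        (f := fun i : Fin n => PM (σ i) i) 2 (fun i _ => hentrydeg _ _)
      rw [Finset.card_univ, Fintype.card_fin, mul_comm n 2] at this
      rw [this]
      have hz : (PM (σ i) i).coeff 2 = 0 := by
        rw [hcoeff2, Matrix.diagonal_apply_ne _ hi]
      rw [Finset.prod_eq_zero (Finset.mem_univ i) hz, mul_zero]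
    · intro h
      exact absurd (Finset.mem_univ _) h
  have hdeg : P.natDegree ≤ 2 * n := by
    rw [hP, Matrix.det_apply']
    refine natDegree_sum_le_of_forall_le _ _ fun σ _ => ?_
    refine le_trans (natDegree_mul_le) ?_
    have h1 : (((Equiv.Perm.sign σ : ℤ) : ℝ[X])).natDegree = 0 := natDegree_intCast _
    have h2 : (∏ i, PM (σ i) i).natDegree ≤ 2 * n := by
      refine le_trans (natDegree_prod_le _ _) ?_
      calc (∑ i, (PM (σ i) i).natDegree) ≤ ∑ _i : Fin n, 2 :=
            Finset.sum_le_sum fun i _ => hentrydeg _ _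
        _ = 2 * n := by simp [Finset.sum_const, Finset.card_univ, mul_comm]
    omega
  have hPne : P ≠ 0 := by
    intro h
    rw [h, coeff_zero] at hcoeff
    exact absurd hcoeff.symm (ne_of_gt (Finset.prod_pos fun i _ => hm i))
  have hroots : ∀ q, P.IsRoot (lam q) := fun q => by
    rw [IsRoot, heval]; exact hroot q
  constructor
  · intro hz
    by_contra hc
    push_neg at hc
    have hzroot : P.IsRoot z := by rw [IsRoot, heval]; exact hz
    have hnotmem : z ∉ Finset.image lam Finset.univ := by
      simp only [Finset.mem_image, Finset.mem_univ, true_and, not_exists]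
      exact hc
    have hsub : insert z (Finset.image lam Finset.univ) ⊆ P.roots.toFinset := by
      intro y hy
      rw [Multiset.mem_toFinset, mem_roots hPne]
      rcases Finset.mem_insert.1 hy with rfl | hy
      · exact hzroot
      · obtain ⟨q, _, rfl⟩ := Finset.mem_image.1 hy
        exact hroots q
    have hcard : 2 * n + 1 ≤ P.roots.toFinset.card := by
      have h1 : (insert z (Finset.image lam Finset.univ)).card = 2 * n + 1 := by
        rw [Finset.card_insert_of_notMem hnotmem,
          Finset.card_image_of_injective _ hlam, Finset.card_univ, Fintype.card_fin]
      rw [← h1]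
      exact Finset.card_le_card hsub
    have hle : P.roots.toFinset.card ≤ 2 * n :=
      le_trans (Multiset.toFinset_card_le _) (le_trans (P.card_roots') hdeg)
    omega
  · rintro ⟨q, rfl⟩
    rw [← heval]
    exact hroots q

open Matrix

/-- Structured inverse quadratic proper value problem (k = 2 case): given
graphs `G`, `H`, a positive definite diagonal mass matrix and `2n` distinct
real numbers, there exist symmetric `D`, `K` with graphs `H`, `G` such that
`det (M z² + D z + K)` vanishes exactly at the given numbers. -/
theorem stmt_11 (n : ℕ) (G H : SimpleGraph (Fin n))
    (m : Fin n → ℝ) (hm : ∀ i, 0 < m i)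
    (lam : Fin (2 * n) → ℝ) (hlam : Function.Injective lam) :
    ∃ D K : Matrix (Fin n) (Fin n) ℝ,
      D.IsSymm ∧ K.IsSymm ∧
      (∀ i j : Fin n, i ≠ j → ((D i j ≠ 0) ↔ H.Adj i j)) ∧
      (∀ i j : Fin n, i ≠ j → ((K i j ≠ 0) ↔ G.Adj i j)) ∧
      (∀ z : ℝ,
        (z ^ 2 • Matrix.diagonal m + z • D + K).det = 0 ↔ ∃ q, lam q = z) := by
  classical
  set AH : Fin n → Fin n → ℝ := fun i j => if H.Adj i j then 1 else 0 with hAHdef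
  set AG : Fin n → Fin n → ℝ := fun i j => if G.Adj i j then 1 else 0 with hAGdef
  have hAH0 : ∀ i, AH i i = 0 := fun i => by simp [hAHdef]
  have hAG0 : ∀ i, AG i i = 0 := fun i => by simp [hAGdef]
  have hm' : ∀ i, m i ≠ 0 := fun i => (hm i).ne'
  obtain ⟨t, ht, d, k, hroot⟩ := key_exists n m hm' lam hlam AH AG hAH0 hAG0
  have hsymmAH : (Matrix.of AH)ᵀ = Matrix.of AH := by
    ext i j
    simp only [Matrix.transpose_apply, Matrix.of_apply, hAHdef]
    by_cases h : H.Adj i j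
    · rw [if_pos h, if_pos h.symm]
    · rw [if_neg (fun hji => h hji.symm), if_neg h]
  have hsymmAG : (Matrix.of AG)ᵀ = Matrix.of AG := by
    ext i j
    simp only [Matrix.transpose_apply, Matrix.of_apply, hAGdef]
    by_cases h : G.Adj i j
    · rw [if_pos h, if_pos h.symm]
    · rw [if_neg (fun hji => h hji.symm), if_neg h]
  refine ⟨Matrix.diagonal d + t • Matrix.of AH, Matrix.diagonal k + t • Matrix.of AG,
    ?_, ?_, ?_, ?_, fun z => root_set_exact n m hm lam hlam _ _ hroot z⟩
  · show (Matrix.diagonal d + t • Matrix.of AH)ᵀ = _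
    rw [Matrix.transpose_add, Matrix.transpose_smul, Matrix.diagonal_transpose, hsymmAH]
  · show (Matrix.diagonal k + t • Matrix.of AG)ᵀ = _
    rw [Matrix.transpose_add, Matrix.transpose_smul, Matrix.diagonal_transpose, hsymmAG]
  · intro i j hij
    have : (Matrix.diagonal d + t • Matrix.of AH) i j = t * AH i j := by
      simp [Matrix.add_apply, Matrix.smul_apply, Matrix.diagonal_apply_ne _ hij]
    rw [this, hAHdef]
    by_cases h : H.Adj i j
    · simpa [h] using ht
    · simp [h]
  · intro i j hij
    have : (Matrix.diagonal k + t • Matrix.of AG) i j = t * AG i j := by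
      simp [Matrix.add_apply, Matrix.smul_apply, Matrix.diagonal_apply_ne _ hij]
    rw [this, hAGdef]
    by_cases h : G.Adj i j
    · simpa [h] using ht
    · simp [h]
end
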